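/- Let ℓ, u be the bounds used in the patching step: ℓ_a = 1 if a ∈ 𝒜 or a = ts, ℓ_a = 0 otherwise; u_{ts} = 1, u_a = 1 + (1 + 1/τ)·α·x_a for a ∈ 𝒜, u_a = (1 + 1/τ)·α·x_a otherwise. Suppose 𝒜 is α-thin with respect to x (|𝒜 ∩ ∂⁺(U)| ≤ α·x(∂⁺(U)) for all nonempty proper U), α ≥ 1, 0 < τ ≤ 1/4, every τ-narrow s-t cut U satisfies |𝒜 ∩ ∂⁺(U)| = 1, and x is a feasible ATSPP LP solution. Then for every subset U ⊆ V, ℓ(∂⁺(U)) ≤ u(∂⁻(U)). -/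

import Mathlib

open Finset

variable {V : Type*} [Fintype V] [DecidableEq V]

/-- Total `x`-weight of arcs from `A` to `B`. -/
def flowBtw (x : V → V → ℝ) (A B : Finset V) : ℝ := ∑ u ∈ A, ∑ v ∈ B, x u v

/-- `x(∂⁺(U))`: weight of arcs leaving `U`. -/
def cutOut (x : V → V → ℝ) (U : Finset V) : ℝ := flowBtw x U Uᶜ

/-- `x(∂⁻(U))`: weight of arcs entering `U`. -/
def cutIn (x : V → V → ℝ) (U : Finset V) : ℝ := flowBtw x Uᶜ U

/-- Feasibility for the ATSPP subtour elimination LP on the complete digraph on `V`. -/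
structure FeasLP (s t : V) (x : V → V → ℝ) : Prop where
  nonneg : ∀ u v, 0 ≤ x u v
  diag : ∀ v, x v v = 0
  outS : ∑ v, x s v = 1
  inS : ∑ v, x v s = 0
  inT : ∑ v, x v t = 1
  outT : ∑ v, x t v = 0
  outDeg : ∀ v, v ≠ s → v ≠ t → ∑ w, x v w = 1
  inDeg : ∀ v, v ≠ s → v ≠ t → ∑ w, x w v = 1
  cut : ∀ U : Finset V, s ∈ U → U ≠ Finset.univ → 1 ≤ cutOut x U

/-- A `τ`-narrow `s`-`t` cut: `s ∈ U`, `t ∉ U`, and `x(∂⁺(U)) < 1 + τ`. -/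
def NarrowCut (s t : V) (x : V → V → ℝ) (τ : ℝ) (U : Finset V) : Prop :=
  s ∈ U ∧ t ∉ U ∧ cutOut x U < 1 + τ


-- aux lemmas
lemma pair_ind_sum (t s : V) (A B : Finset V) :
    ∑ u ∈ A, ∑ v ∈ B, (if u = t ∧ v = s then (1:ℝ) else 0)
      = if t ∈ A ∧ s ∈ B then 1 else 0 := by
  have h : ∀ u ∈ A, ∑ v ∈ B, (if u = t ∧ v = s then (1:ℝ) else 0)
      = if u = t ∧ s ∈ B then 1 else 0 := by
    intro u _
    by_cases h1 : u = t
    · simp [h1, Finset.sum_ite_eq' B s (fun _ => (1:ℝ))]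
    · simp [h1]
  rw [Finset.sum_congr rfl h]
  by_cases hs : s ∈ B
  · simp [hs, Finset.sum_ite_eq' A t (fun _ => (1:ℝ))]
  · simp [hs]

lemma mem_ind_sum (𝒜 : Finset (V × V)) (U : Finset V) :
    ∑ u ∈ U, ∑ v ∈ Uᶜ, (if (u, v) ∈ 𝒜 then (1:ℝ) else 0)
      = ((𝒜.filter (fun a => a.1 ∈ U ∧ a.2 ∉ U)).card : ℝ) := by
  rw [← Finset.sum_product', Finset.sum_boole]
  norm_cast
  congr 1
  ext p
  simp only [Finset.mem_filter, Finset.mem_product, Finset.mem_compl]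
  tauto

lemma flow_cons {s t : V} {x : V → V → ℝ} (hx : FeasLP s t x) (hst : s ≠ t) (U : Finset V) :
    cutOut x U = cutIn x U + (if s ∈ U then 1 else 0) - (if t ∈ U then 1 else 0) := by
  have h1 : cutOut x U + flowBtw x U U = ∑ u ∈ U, ∑ v, x u v := by
    unfold cutOut flowBtw
    rw [← Finset.sum_add_distrib]
    exact Finset.sum_congr rfl fun u _ => by rw [add_comm, Finset.sum_add_sum_compl]
  have h2 : cutIn x U + flowBtw x U U = ∑ u ∈ U, ∑ v, x v u := by
    unfold cutIn flowBtw
    rw [Finset.sum_comm, Finset.sum_comm (s := U) (t := U), ← Finset.sum_add_distrib]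
    exact Finset.sum_congr rfl fun u _ => by rw [add_comm, Finset.sum_add_sum_compl]
  have h3 : ∀ u ∈ U, (∑ v, x u v) - (∑ v, x v u)
      = (if u = s then 1 else 0) - (if u = t then 1 else 0) := by
    intro u _
    by_cases h1' : u = s
    · subst h1'; simp [hx.outS, hx.inS, hst]
    · by_cases h2' : u = t
      · subst h2'; simp [hx.outT, hx.inT, (Ne.symm hst)]
      · simp [h1', h2', hx.outDeg u h1' h2', hx.inDeg u h1' h2']
  have h4 : cutOut x U - cutIn x U
      = ∑ u ∈ U, ((if u = s then (1:ℝ) else 0) - (if u = t then 1 else 0)) := by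
    calc cutOut x U - cutIn x U
        = (∑ u ∈ U, ∑ v, x u v) - ∑ u ∈ U, ∑ v, x v u := by linarith
      _ = ∑ u ∈ U, ((∑ v, x u v) - (∑ v, x v u)) := (Finset.sum_sub_distrib _ _).symm
      _ = _ := Finset.sum_congr rfl h3
  rw [Finset.sum_sub_distrib, Finset.sum_ite_eq' U s (fun _ => (1:ℝ)),
    Finset.sum_ite_eq' U t (fun _ => (1:ℝ))] at h4
  linarith

theorem stmt9 (s t : V) (hst : s ≠ t) (x : V → V → ℝ) (hx : FeasLP s t x)
    (τ α : ℝ) (hτ0 : 0 < τ) (hτ : τ ≤ 1/4) (hα : 1 ≤ α)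
    (𝒜 : Finset (V × V))
    (hthin : ∀ U : Finset V, U.Nonempty → U ≠ Finset.univ →
      ((𝒜.filter (fun a => a.1 ∈ U ∧ a.2 ∉ U)).card : ℝ) ≤ α * cutOut x U)
    (hnarrowOne : ∀ U : Finset V, NarrowCut s t x τ U →
      (𝒜.filter (fun a => a.1 ∈ U ∧ a.2 ∉ U)).card = 1) :
    ∀ U : Finset V,
      (∑ u ∈ U, ∑ v ∈ Uᶜ, (if (u, v) ∈ 𝒜 ∨ (u = t ∧ v = s) then (1 : ℝ) else 0)) ≤
      (∑ u ∈ Uᶜ, ∑ v ∈ U, (if u = t ∧ v = s then (1 : ℝ)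
        else if (u, v) ∈ 𝒜 then 1 + (1 + 1/τ) * α * x u v
        else (1 + 1/τ) * α * x u v)) := by
  intro U
  have hτinv : 0 < 1/τ := one_div_pos.mpr hτ0
  have hα0 : (0:ℝ) ≤ α := by linarith
  set c : ℝ := (1 + 1/τ) * α with hc
  have hc0 : 0 ≤ c := by rw [hc]; nlinarith
  by_cases hUe : U = ∅
  · subst hUe; simp
  by_cases hUu : U = Finset.univ
  · subst hUu; simp
  have hU : U.Nonempty := Finset.nonempty_iff_ne_empty.mpr hUe
  have hxts : x t s = 0 :=
    (Finset.sum_eq_zero_iff_of_nonneg (fun v _ => hx.nonneg t v)).mp hx.outT s (Finset.mem_univ s)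
  have hCI0 : 0 ≤ cutIn x U :=
    Finset.sum_nonneg fun u _ => Finset.sum_nonneg fun v _ => hx.nonneg u v
  -- LHS upper bound
  have hL : (∑ u ∈ U, ∑ v ∈ Uᶜ, (if (u, v) ∈ 𝒜 ∨ (u = t ∧ v = s) then (1:ℝ) else 0))
      ≤ ((𝒜.filter (fun a => a.1 ∈ U ∧ a.2 ∉ U)).card : ℝ)
        + (if t ∈ U ∧ s ∈ Uᶜ then 1 else 0) := by
    calc (∑ u ∈ U, ∑ v ∈ Uᶜ, (if (u, v) ∈ 𝒜 ∨ (u = t ∧ v = s) then (1:ℝ) else 0))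
        ≤ ∑ u ∈ U, ∑ v ∈ Uᶜ,
            ((if (u, v) ∈ 𝒜 then (1:ℝ) else 0) + (if u = t ∧ v = s then 1 else 0)) := by
          refine Finset.sum_le_sum fun u _ => Finset.sum_le_sum fun v _ => ?_
          by_cases h2 : u = t ∧ v = s
          · obtain ⟨rfl, rfl⟩ := h2
            by_cases h1 : (u, v) ∈ 𝒜 <;> simp [h1] <;> norm_num
          · by_cases h1 : (u, v) ∈ 𝒜 <;> simp [h1, h2]
      _ = _ := by
          simp only [Finset.sum_add_distrib]
          rw [mem_ind_sum, pair_ind_sum]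
  -- RHS lower bound
  have hR : c * cutIn x U + (if t ∈ Uᶜ ∧ s ∈ U then (1:ℝ) else 0)
      ≤ (∑ u ∈ Uᶜ, ∑ v ∈ U, (if u = t ∧ v = s then (1 : ℝ)
          else if (u, v) ∈ 𝒜 then 1 + c * x u v
          else c * x u v)) := by
    have hrw : c * cutIn x U = ∑ u ∈ Uᶜ, ∑ v ∈ U, c * x u v := by
      unfold cutIn flowBtw
      rw [Finset.mul_sum]
      exact Finset.sum_congr rfl fun u _ => Finset.mul_sum _ _ _
    rw [hrw, ← pair_ind_sum t s Uᶜ U, ← Finset.sum_add_distrib]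
    refine Finset.sum_le_sum fun u _ => ?_
    rw [← Finset.sum_add_distrib]
    refine Finset.sum_le_sum fun v _ => ?_
    by_cases h2 : u = t ∧ v = s
    · obtain ⟨rfl, rfl⟩ := h2
      simp [hxts]
    · by_cases h1 : (u, v) ∈ 𝒜 <;>
        simp only [h1, h2, if_true, if_false] <;>
        nlinarith [mul_nonneg hc0 (hx.nonneg u v)]
  refine hL.trans (le_trans ?_ hR)
  have hcons := flow_cons hx hst U
  have hthinU := hthin U hU hUu
  have hCIcompl : cutOut x Uᶜ = cutIn x U := by
    simp [cutOut, cutIn, compl_compl]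
  set CI := cutIn x U
  set CO := cutOut x U
  set N := ((𝒜.filter (fun a => a.1 ∈ U ∧ a.2 ∉ U)).card : ℝ) with hNdef
  have h1τ : (1/τ) * τ = 1 := one_div_mul_cancel hτ0.ne'
  by_cases hsU : s ∈ U
  · by_cases htU : t ∈ U
    · -- both in U
      have h1 : 1 ≤ CO := hx.cut U hsU hUu
      simp only [Finset.mem_compl, hsU, htU, not_true, and_false, false_and, if_false,
        and_true, true_and]
      simp only [hsU, htU, if_true] at hcons
      rw [hc]
      nlinarith [mul_nonneg (mul_nonneg hτinv.le hα0) hCI0]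
    · -- s-t cut
      simp only [Finset.mem_compl, hsU, htU, not_false_iff, and_true, true_and, false_and,
        and_false, if_false, if_true]
      simp only [hsU, htU, if_true, if_false] at hcons
      by_cases hnar : CO < 1 + τ
      · have hcard := hnarrowOne U ⟨hsU, htU, hnar⟩
        have hN : N = 1 := by rw [hNdef, hcard]; norm_num
        rw [hN]
        nlinarith [mul_nonneg hc0 hCI0]
      · push_neg at hnar
        have hCIτ : τ ≤ CI := by linarith
        have key : (1/τ) * α * τ ≤ (1/τ) * α * CI :=
          mul_le_mul_of_nonneg_left hCIτ (mul_nonneg hτinv.le hα0)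
        rw [hc]
        nlinarith [key, h1τ]
  · by_cases htU : t ∈ U
    · -- t-s cut
      have hsc : s ∈ Uᶜ := Finset.mem_compl.mpr hsU
      have hnc : Uᶜ ≠ Finset.univ := by
        intro h
        exact hUe (by simpa using congrArg compl h)
      have h1 : 1 ≤ CI := by
        have := hx.cut Uᶜ hsc hnc
        rwa [hCIcompl] at this
      simp only [Finset.mem_compl, hsU, htU, not_false_iff, not_true, and_true, true_and,
        false_and, and_false, if_true, if_false]
      simp only [hsU, htU, if_true, if_false] at hcons
      rw [hc]
      nlinarith [mul_nonneg (mul_nonneg hτinv.le hα0) hCI0]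
    · -- neither
      have hsc : s ∈ Uᶜ := Finset.mem_compl.mpr hsU
      have hnc : Uᶜ ≠ Finset.univ := by
        intro h
        exact hUe (by simpa using congrArg compl h)
      have h1 : 1 ≤ CI := by
        have := hx.cut Uᶜ hsc hnc
        rwa [hCIcompl] at this
      simp only [Finset.mem_compl, hsU, htU, false_and, and_false, if_false]
      simp only [hsU, htU, if_false] at hcons
      rw [hc]
      nlinarith [mul_nonneg (mul_nonneg hτinv.le hα0) hCI0]
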